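/- Assume the Ordered-Degree Condition deg m_0 ≤ deg m_1 ≤ … ≤ deg m_{n-1} and assume additionally deg m_k = deg m_{k+1} = … = deg m_{n-1}. Then for every tuple e = (e_0,…,e_{n-1}) with e_i ∈ F[x], if w_H(e) ≤ ⌊(n−k)/2⌋ then w_D(e) ≤ ⌊(N−K)/2⌋. -/

import Mathlib

open Polynomial Finset

/-- Under the Ordered-Degree Condition together with
`deg m_k = … = deg m_{n-1}`, the implication `w_H(e) ≤ ⌊(n−k)/2⌋ → w_D(e) ≤ ⌊(N−K)/2⌋`
holds for every tuple `e`. -/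
theorem hamming_weight_bound_implies_degree_weight_bound
    {F : Type*} [Field F] [DecidableEq F] (n : ℕ) (hn : 1 ≤ n)
    (m : Fin n → F[X])
    (hmonic : ∀ i, (m i).Monic)
    (hdeg : ∀ i, 1 ≤ (m i).natDegree)
    (hcop : ∀ i j, i ≠ j → IsCoprime (m i) (m j))
    (k : ℕ) (hk1 : 1 ≤ k) (hkn : k ≤ n)
    (N K : ℕ)
    (hN : N = (∏ i, m i).natDegree)
    (hK : K = (∏ i ∈ Finset.univ.filter (fun i : Fin n => (i : ℕ) < k), m i).natDegree)
    (hord : ∀ i j : Fin n, i ≤ j → (m i).natDegree ≤ (m j).natDegree)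
    (heq : ∀ i j : Fin n, k ≤ (i : ℕ) → k ≤ (j : ℕ) → (m i).natDegree = (m j).natDegree) :
    ∀ e : Fin n → F[X],
      (Finset.univ.filter (fun i : Fin n => e i ≠ 0)).card ≤ (n - k) / 2 →
      ∑ i ∈ Finset.univ.filter (fun i : Fin n => e i ≠ 0), (m i).natDegree ≤ (N - K) / 2 := by
  intro e he
  rcases eq_or_lt_of_le hkn with hkn' | hkn'
  · -- k = n : the filter must be empty
    subst hkn'
    simp only [Nat.sub_self, Nat.zero_div, Nat.le_zero, Finset.card_eq_zero] at he
    rw [he]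
    simp
  · -- k < n
    have hne : ∀ i, m i ≠ 0 := fun i => (hmonic i).ne_zero
    set last : Fin n := ⟨n - 1, by omega⟩ with hlast
    set d := (m last).natDegree with hd
    have hle : ∀ i : Fin n, (m i).natDegree ≤ d := by
      intro i
      exact hord i last (by simp [Fin.le_def, hlast]; omega)
    have hklast : k ≤ (last : ℕ) := by simp [hlast]; omega
    have heqd : ∀ i : Fin n, k ≤ (i : ℕ) → (m i).natDegree = d :=
      fun i hi => heq i last hi hklast
    -- sum decomposition
    have hNsum : N = ∑ i, (m i).natDegree := by
      rw [hN, Polynomial.natDegree_prod _ _ (fun i _ => hne i)]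
    have hKsum : K = ∑ i ∈ Finset.univ.filter (fun i : Fin n => (i : ℕ) < k),
        (m i).natDegree := by
      rw [hK, Polynomial.natDegree_prod _ _ (fun i _ => hne i)]
    have hsplit : N = K + ∑ i ∈ Finset.univ.filter (fun i : Fin n => ¬ (i : ℕ) < k),
        (m i).natDegree := by
      rw [hNsum, hKsum, ← Finset.sum_filter_add_sum_filter_not Finset.univ
        (fun i : Fin n => (i : ℕ) < k)]
    have hcard : (Finset.univ.filter (fun i : Fin n => ¬ (i : ℕ) < k)).card = n - k := by
      have h1 : (Finset.univ.filter (fun i : Fin n => (i : ℕ) < k)).card = k := by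
        have : Finset.univ.filter (fun i : Fin n => (i : ℕ) < k)
            = Finset.map (Fin.castLEEmb hkn) Finset.univ := by
          ext i
          simp only [Finset.mem_filter, Finset.mem_univ, true_and, Finset.mem_map,
            Fin.castLEEmb_apply]
          constructor
          · intro hi
            exact ⟨⟨i, hi⟩, rfl⟩
          · rintro ⟨j, rfl⟩
            exact j.isLt
        rw [this, Finset.card_map, Finset.card_univ, Fintype.card_fin]
      have h2 := Finset.card_filter_add_card_filter_not
        (s := (Finset.univ : Finset (Fin n))) (p := fun i : Fin n => (i : ℕ) < k)
      rw [Finset.card_univ, Fintype.card_fin] at h2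
      omega
    have hsum2 : ∑ i ∈ Finset.univ.filter (fun i : Fin n => ¬ (i : ℕ) < k),
        (m i).natDegree = (n - k) * d := by
      rw [Finset.sum_congr rfl (fun i hi => heqd i (by
        simp only [Finset.mem_filter] at hi; omega)), Finset.sum_const, hcard, smul_eq_mul]
    have hNK : N - K = (n - k) * d := by omega
    calc ∑ i ∈ Finset.univ.filter (fun i : Fin n => e i ≠ 0), (m i).natDegree
        ≤ ∑ _i ∈ Finset.univ.filter (fun i : Fin n => e i ≠ 0), d :=
          Finset.sum_le_sum (fun i _ => hle i)
      _ = (Finset.univ.filter (fun i : Fin n => e i ≠ 0)).card * d := by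
          rw [Finset.sum_const, smul_eq_mul]
      _ ≤ ((n - k) / 2) * d := Nat.mul_le_mul_right d he
      _ ≤ ((n - k) * d) / 2 := by
          rw [Nat.le_div_iff_mul_le (by norm_num)]
          calc (n - k) / 2 * d * 2 = (n - k) / 2 * 2 * d := by ring
            _ ≤ (n - k) * d := Nat.mul_le_mul_right d (Nat.div_mul_le_self _ _)
      _ = (N - K) / 2 := by rw [hNK]
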